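/- Let (Y_n)_{n∈ℤ} be stationary, L ≥ 1, y ∈ ℬ^L with positive probability, and let T_0 = 0 < T_1 < T_2 < ⋯ be the successive backward recurrence times of the block y: T_j = min{t > T_{j−1} : Y_{1−t}^{L−t} = y}. Then for all n, t ≥ 1, P[T_n − T_{n−1} = t, Y_1^L = y] = P[T_1 = t, Y_1^L = y]; consequently E[T_j | Y_1^L = y] = j · E[T_1 | Y_1^L = y]. -/

import Mathlib

open MeasureTheory Filter
open scoped ENNReal

namespace Stmt4
attribute [local instance] Classical.propDecidable
variable {Ω : Type*}

/-- number of occurrences (membership in `blk`) in the window `[a, a+k)`. -/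
noncomputable def cnt (blk : ℤ → Set Ω) (ω : Ω) (a : ℤ) (k : ℕ) : ℕ :=
  ∑ u ∈ Finset.range k, if ω ∈ blk (a + u) then 1 else 0

variable {blk : ℤ → Set Ω} {ω : Ω}

lemma cnt_add (a : ℤ) (k l : ℕ) :
    cnt blk ω a (k + l) = cnt blk ω a k + cnt blk ω (a + k) l := by
  rw [cnt, Finset.sum_range_add]
  congr 1
  refine Finset.sum_congr rfl fun u _ => ?_
  push_cast
  ring_nf

lemma cnt_succ (a : ℤ) (k : ℕ) :
    cnt blk ω a (k + 1) = cnt blk ω a k + if ω ∈ blk (a + k) then 1 else 0 := by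
  rw [cnt_add]
  simp only [cnt, Finset.range_one, Finset.sum_singleton, Nat.cast_zero, add_zero]

lemma cnt_eq_zero {a : ℤ} {k : ℕ} :
    cnt blk ω a k = 0 ↔ ∀ u : ℕ, u < k → ω ∉ blk (a + u) := by
  rw [cnt, Finset.sum_eq_zero_iff]
  constructor
  · intro h u hu hmem
    have := h u (Finset.mem_range.2 hu)
    simp [hmem] at this
  · intro h u hu
    simp [h u (Finset.mem_range.1 hu)]

lemma cnt_mem_pos {a : ℤ} {k : ℕ} {u : ℕ} (hu : u < k) (hmem : ω ∈ blk (a + u)) :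
    0 < cnt blk ω a k := by
  rcases Nat.eq_zero_or_pos (cnt blk ω a k) with h | h
  · exact absurd hmem (cnt_eq_zero.1 h u hu)
  · exact h

lemma cnt_zero (a : ℤ) : cnt blk ω a 0 = 0 := by simp [cnt]

lemma cnt_lt_of_mem {a : ℤ} {k k' : ℕ} (h : k < k') (hmem : ω ∈ blk (a + k)) :
    cnt blk ω a k < cnt blk ω a k' := by
  have h1 : k' = k + (k' - k) := by omega
  rw [h1, cnt_add]
  have h2 : 0 < cnt blk ω (a + k) (k' - k) := by
    refine cnt_mem_pos (u := 0) (by omega) ?_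
    simpa using hmem
  omega

/-- window of length `k ≥ 1` whose only occurrence is at the left end has count 1 -/
lemma cnt_eq_one {a : ℤ} {k : ℕ} (hk : 1 ≤ k) (h0 : ω ∈ blk a)
    (h1 : ∀ u : ℕ, 1 ≤ u → u < k → ω ∉ blk (a + u)) : cnt blk ω a k = 1 := by
  have hk1 : k = 1 + (k - 1) := by omega
  rw [hk1, cnt_add]
  simp only [Nat.cast_one]
  have e0 : cnt blk ω a 1 = 1 := by
    simp only [cnt, Finset.range_one, Finset.sum_singleton, Nat.cast_zero, add_zero]
    simp [h0]
  have e1 : cnt blk ω (a + 1) (k - 1) = 0 := by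
    rw [cnt_eq_zero]
    intro u hu
    have := h1 (1 + u) (by omega) (by omega)
    intro hc
    exact this (by convert hc using 2; push_cast; ring)
  omega

lemma cnt_one_lemma {a : ℤ} {k : ℕ} (h : cnt blk ω a k = 1) (h0 : ω ∈ blk a)
    {u : ℕ} (hu1 : 1 ≤ u) (huk : u < k) : ω ∉ blk (a + u) := by
  have hk : k = 1 + (k - 1) := by omega
  rw [hk, cnt_add] at h
  simp only [Nat.cast_one] at h
  have e0 : cnt blk ω a 1 = 1 := by
    simp only [cnt, Finset.range_one, Finset.sum_singleton, Nat.cast_zero, add_zero]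
    simp [h0]
  have e1 : cnt blk ω (a + 1) (k - 1) = 0 := by omega
  have := cnt_eq_zero.1 e1 (u - 1) (by omega)
  intro hc
  exact this (by convert hc using 2; push_cast; omega)

/-- the block occurs now, and every occurrence is followed by a later occurrence -/
def Good (blk : ℤ → Set Ω) (ω : Ω) : Prop :=
  ω ∈ blk 0 ∧ ∀ s : ℕ, ω ∈ blk (s : ℤ) → ∃ u : ℕ, s < u ∧ ω ∈ blk (u : ℤ)

variable {T : ℕ → Ω → ℕ}

lemma T_step (hg : Good blk ω)
    (hTs : ∀ j, T (j + 1) ω = sInf {t : ℕ | T j ω < t ∧ ω ∈ blk (t : ℤ)})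
    (j : ℕ) (hmem : ω ∈ blk (T j ω : ℤ)) :
    T j ω < T (j + 1) ω ∧ ω ∈ blk (T (j + 1) ω : ℤ) ∧
      ∀ v : ℕ, T j ω < v → v < T (j + 1) ω → ω ∉ blk (v : ℤ) := by
  set S : Set ℕ := {t : ℕ | T j ω < t ∧ ω ∈ blk (t : ℤ)} with hS
  have hne : S.Nonempty := by
    obtain ⟨u, hu1, hu2⟩ := hg.2 _ hmem
    exact ⟨u, hu1, hu2⟩
  have hmemS : T (j + 1) ω ∈ S := by rw [hTs j]; exact Nat.sInf_mem hne
  refine ⟨hmemS.1, hmemS.2, fun v hv1 hv2 => ?_⟩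
  intro hc
  have : v ∉ S := Nat.notMem_of_lt_sInf (by rw [← hTs j]; exact hv2)
  exact this ⟨hv1, hc⟩

lemma T_spec (hg : Good blk ω) (hT0 : T 0 ω = 0)
    (hTs : ∀ j, T (j + 1) ω = sInf {t : ℕ | T j ω < t ∧ ω ∈ blk (t : ℤ)}) :
    ∀ j, ω ∈ blk (T j ω : ℤ) ∧ cnt blk ω 0 (T j ω) = j := by
  intro j
  induction j with
  | zero => rw [hT0]; exact ⟨by simpa using hg.1, cnt_zero 0⟩
  | succ j ih =>
    obtain ⟨hlt, hmem', hmin⟩ := T_step hg hTs j ih.1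
    refine ⟨hmem', ?_⟩
    set d : ℕ := T (j + 1) ω - T j ω with hd
    have hTd : T (j + 1) ω = T j ω + d := by omega
    rw [hTd, cnt_add, ih.2]
    have : cnt blk ω (0 + (T j ω : ℤ)) d = 1 := by
      refine cnt_eq_one (by omega) (by simpa using ih.1) ?_
      intro u hu1 hud
      have := hmin (T j ω + u) (by omega) (by omega)
      intro hc
      exact this (by convert hc using 2; push_cast; ring)
    omega

lemma T_char (hg : Good blk ω) (hT0 : T 0 ω = 0)
    (hTs : ∀ j, T (j + 1) ω = sInf {t : ℕ | T j ω < t ∧ ω ∈ blk (t : ℤ)})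
    {j s : ℕ} : T j ω = s ↔ ω ∈ blk (s : ℤ) ∧ cnt blk ω 0 s = j := by
  constructor
  · rintro rfl; exact T_spec hg hT0 hTs j
  · rintro ⟨hbs, hcs⟩
    obtain ⟨hb', hc'⟩ := T_spec hg hT0 hTs j
    by_contra hne
    rcases Nat.lt_or_ge (T j ω) s with h | h
    · have := cnt_lt_of_mem (blk := blk) (a := 0) h (by simpa using hb')
      omega
    · have hlt : s < T j ω := by omega
      have := cnt_lt_of_mem (blk := blk) (a := 0) hlt (by simpa using hbs)
      omega

lemma T1_char (h0 : ω ∈ blk 0) (hT0 : T 0 ω = 0)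
    (hTs : ∀ j, T (j + 1) ω = sInf {t : ℕ | T j ω < t ∧ ω ∈ blk (t : ℤ)})
    {t : ℕ} (ht : 1 ≤ t) :
    T 1 ω = t ↔ ω ∈ blk (t : ℤ) ∧ cnt blk ω 0 t = 1 := by
  have hS : T 1 ω = sInf {u : ℕ | 0 < u ∧ ω ∈ blk (u : ℤ)} := by
    rw [hTs 0, hT0]
  constructor
  · intro h
    rw [h] at hS
    have hne : {u : ℕ | 0 < u ∧ ω ∈ blk (u : ℤ)}.Nonempty := by
      by_contra hc
      rw [Set.not_nonempty_iff_eq_empty] at hc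
      rw [hc, Nat.sInf_empty] at hS
      omega
    have hmem : t ∈ {u : ℕ | 0 < u ∧ ω ∈ blk (u : ℤ)} := hS ▸ Nat.sInf_mem hne
    refine ⟨hmem.2, ?_⟩
    have := cnt_eq_one (blk := blk) (a := 0) (k := t) ht (by simpa using h0) ?_
    · simpa using this
    · intro u hu1 hut
      have : u ∉ {u : ℕ | 0 < u ∧ ω ∈ blk (u : ℤ)} :=
        Nat.notMem_of_lt_sInf (by omega)
      intro hc
      exact this ⟨by omega, by simpa using hc⟩
  · rintro ⟨hbt, hct⟩
    have hmemt : t ∈ {u : ℕ | 0 < u ∧ ω ∈ blk (u : ℤ)} := ⟨by omega, hbt⟩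
    have h1 : sInf {u : ℕ | 0 < u ∧ ω ∈ blk (u : ℤ)} ≤ t := Nat.sInf_le hmemt
    have hmemInf := Nat.sInf_mem ⟨t, hmemt⟩
    rw [hS]
    by_contra hne
    have hlt : sInf {u : ℕ | 0 < u ∧ ω ∈ blk (u : ℤ)} < t := by omega
    have := cnt_one_lemma (blk := blk) (a := 0)
      (by simpa using hct) (by simpa using h0)
      (u := sInf {u : ℕ | 0 < u ∧ ω ∈ blk (u : ℤ)}) hmemInf.1 hlt
    exact this (by simpa using hmemInf.2)

lemma exists_fut (h0 : ω ∈ blk 0)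
    (hinf : ∀ s : ℕ, ∃ u : ℕ, s < u ∧ ω ∈ blk (-(u : ℤ))) :
    ∀ m : ℕ, ∃ s : ℕ, ω ∈ blk (-(s : ℤ)) ∧ cnt blk ω (-(s : ℤ)) s = m := by
  intro m
  induction m with
  | zero => exact ⟨0, by simpa using h0, by simpa using cnt_zero (blk := blk) (ω := ω) 0⟩
  | succ m ih =>
    obtain ⟨s, hbs, hcs⟩ := ih
    set S : Set ℕ := {u : ℕ | s < u ∧ ω ∈ blk (-(u : ℤ))} with hSdef
    have hne : S.Nonempty := hinf s
    have hmem : sInf S ∈ S := Nat.sInf_mem hne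
    set u : ℕ := sInf S with hu
    refine ⟨u, hmem.2, ?_⟩
    have hsu : s < u := hmem.1
    have hdec : u = (u - s) + s := by omega
    have h1 : cnt blk ω (-(u : ℤ)) u = cnt blk ω (-(u : ℤ)) (u - s) + cnt blk ω (-(s : ℤ)) s := by
      nth_rewrite 2 [hdec]
      rw [cnt_add]
      congr 2
      push_cast
      omega
    have h2 : cnt blk ω (-(u : ℤ)) (u - s) = 1 := by
      refine cnt_eq_one (by omega) hmem.2 ?_
      intro i hi1 hi2
      have hv : u - i ∉ S := Nat.notMem_of_lt_sInf (by omega)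
      intro hc
      refine hv ⟨by omega, ?_⟩
      convert hc using 2
      push_cast
      omega
    omega

section Meas
variable [MeasurableSpace Ω] {μ : Measure Ω} {σ : Ω → Ω}

lemma iter_mem (hsh : ∀ (ω : Ω) (k : ℤ), σ ω ∈ blk k ↔ ω ∈ blk (k - 1)) :
    ∀ (s : ℕ) (ω : Ω) (k : ℤ), σ^[s] ω ∈ blk k ↔ ω ∈ blk (k - s) := by
  intro s
  induction s with
  | zero => intro ω k; simp
  | succ s ih =>
    intro ω k
    rw [Function.iterate_succ', Function.comp_apply, hsh, ih]
    norm_num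
    ring_nf

lemma cnt_iter (hsh : ∀ (ω : Ω) (k : ℤ), σ ω ∈ blk k ↔ ω ∈ blk (k - 1))
    (s : ℕ) (ω : Ω) (a : ℤ) (k : ℕ) :
    cnt blk (σ^[s] ω) a k = cnt blk ω (a - s) k := by
  simp only [cnt]
  refine Finset.sum_congr rfl fun u _ => ?_
  rw [iter_mem hsh, show a + (u : ℤ) - s = a - s + u by ring]

variable (hm : ∀ k : ℤ, MeasurableSet (blk k))
include hm

lemma meas_cnt (a : ℤ) (k : ℕ) : Measurable fun ω => cnt blk ω a k := by
  unfold cnt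
  exact Finset.measurable_sum _ fun u _ =>
    Measurable.ite (hm _) measurable_const measurable_const

lemma meas_T {T : ℕ → Ω → ℕ} (hT0 : ∀ ω, T 0 ω = 0)
    (hTs : ∀ j ω, T (j + 1) ω = sInf {t : ℕ | T j ω < t ∧ ω ∈ blk (t : ℤ)}) :
    ∀ j, Measurable (T j) := by
  intro j
  induction j with
  | zero =>
    have : T 0 = fun _ => 0 := funext hT0
    rw [this]; exact measurable_const
  | succ j ih =>
    apply measurable_to_countable'
    intro k
    have hlt : ∀ t : ℕ, MeasurableSet {ω | T j ω < t} := fun t =>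
      ih (show MeasurableSet (Set.Iio t) by trivial)
    match k with
    | 0 =>
      have he : T (j+1) ⁻¹' {0} = ⋂ t : ℕ, ({ω | T j ω < t} ∩ blk (t : ℤ))ᶜ := by
        ext ω
        simp only [Set.mem_preimage, Set.mem_singleton_iff, Set.mem_iInter, Set.mem_compl_iff,
          Set.mem_inter_iff, Set.mem_setOf_eq, hTs j ω]
        constructor
        · rintro h t ⟨ht1, ht2⟩
          rcases (Nat.sInf_eq_zero.1 h) with h' | h'
          · simp at h'
          · have hmem : t ∈ {t : ℕ | T j ω < t ∧ ω ∈ blk (t : ℤ)} := ⟨ht1, ht2⟩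
            rw [h'] at hmem
            exact hmem
        · intro h
          have : {t : ℕ | T j ω < t ∧ ω ∈ blk (t : ℤ)} = ∅ := by
            ext t; simp only [Set.mem_setOf_eq, Set.mem_empty_iff_false, iff_false]
            exact h t
          rw [this, Nat.sInf_empty]
      rw [he]
      exact MeasurableSet.iInter fun t => ((hlt t).inter (hm _)).compl
    | (k+1) =>
      have he : T (j+1) ⁻¹' {k+1} =
          ({ω | T j ω < k+1} ∩ blk ((k:ℤ)+1)) ∩
            ⋂ v : ℕ, ⋂ _ : v < k + 1, ({ω | T j ω < v} ∩ blk (v : ℤ))ᶜ := by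
        ext ω
        simp only [Set.mem_preimage, Set.mem_singleton_iff, Set.mem_inter_iff, Set.mem_iInter,
          Set.mem_compl_iff, Set.mem_setOf_eq, hTs j ω]
        constructor
        · intro h
          have hne : {t : ℕ | T j ω < t ∧ ω ∈ blk (t : ℤ)}.Nonempty := by
            by_contra hc
            rw [Set.not_nonempty_iff_eq_empty] at hc
            rw [hc, Nat.sInf_empty] at h
            omega
          have hmem := Nat.sInf_mem hne
          rw [h] at hmem
          refine ⟨⟨hmem.1, by push_cast; exact hmem.2⟩, fun v hv hc => ?_⟩
          exact Nat.notMem_of_lt_sInf (h ▸ hv) hc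
        · rintro ⟨⟨h1, h2⟩, h3⟩
          have hmem : (k+1) ∈ {t : ℕ | T j ω < t ∧ ω ∈ blk (t : ℤ)} :=
            ⟨h1, by push_cast at h2 ⊢; exact h2⟩
          refine le_antisymm (Nat.sInf_le hmem) ?_
          have := Nat.sInf_mem ⟨_, hmem⟩
          by_contra hc
          push_neg at hc
          exact h3 _ hc this
      rw [he]
      exact (((hlt _).inter (hm _)).inter (MeasurableSet.iInter fun v =>
        MeasurableSet.iInter fun _ => ((hlt _).inter (hm _)).compl))


variable [IsProbabilityMeasure μ]

/-- set of points where the block occurs at backward time `s` but never earlier -/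
def Abad (blk : ℤ → Set Ω) (s : ℕ) : Set Ω :=
  blk (s : ℤ) ∩ ⋂ (u : ℕ), ⋂ (_ : s < u), (blk (u : ℤ))ᶜ

lemma meas_Abad (s : ℕ) : MeasurableSet (Abad blk s) :=
  (hm _).inter (MeasurableSet.iInter fun u => MeasurableSet.iInter fun _ => (hm _).compl)

lemma mu_Abad_zero (hσ : MeasurePreserving σ μ μ)
    (hsh : ∀ (ω : Ω) (k : ℤ), σ ω ∈ blk k ↔ ω ∈ blk (k - 1)) (s : ℕ) :
    μ (Abad blk s) = 0 := by
  have hpre : ∀ s : ℕ, (σ^[s]) ⁻¹' (Abad blk s) = Abad blk 0 := by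
    intro s
    ext ω
    simp only [Abad, Set.mem_preimage, Set.mem_inter_iff, Set.mem_iInter, Set.mem_compl_iff,
      iter_mem hsh]
    constructor
    · rintro ⟨h1, h2⟩
      refine ⟨by simpa using h1, fun u hu hc => ?_⟩
      refine h2 (u + s) (by omega) ?_
      convert hc using 2
      push_cast; ring
    · rintro ⟨h1, h2⟩
      refine ⟨by simpa using h1, fun u hu hc => ?_⟩
      refine h2 (u - s) (by omega) ?_
      convert hc using 2
      push_cast; omega
  have hred : μ (Abad blk s) = μ (Abad blk 0) := by
    rw [← hpre s]
    exact ((hσ.iterate s).measure_preimage (meas_Abad hm s).nullMeasurableSet).symm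
  rw [hred]
  -- now show the block a.s. recurs at least once in the past
  set G : ℕ → Set Ω := fun N => blk 0 ∩ {ω | cnt blk ω 1 N = 0} with hG
  set F : ℕ → Set Ω := fun N => (σ^[N]) ⁻¹' (G N) with hF
  have hGm : ∀ N, MeasurableSet (G N) :=
    fun N => (hm _).inter ((meas_cnt hm 1 N) (MeasurableSet.singleton 0))
  have hFm : ∀ N, MeasurableSet (F N) :=
    fun N => (hσ.iterate N).measurable (hGm N)
  have hFG : ∀ N, μ (F N) = μ (G N) :=
    fun N => (hσ.iterate N).measure_preimage (hGm N).nullMeasurableSet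
  have hsub : ∀ N, Abad blk 0 ⊆ G N := by
    intro N ω hω
    simp only [Abad, Set.mem_inter_iff, Set.mem_iInter, Set.mem_compl_iff] at hω
    refine ⟨by simpa using hω.1, ?_⟩
    show cnt blk ω 1 N = 0
    rw [cnt_eq_zero]
    intro u hu hc
    exact hω.2 (1 + u) (by omega) (by convert hc using 2 <;> omega)
  have hFd : Pairwise (Function.onFun Disjoint F) := by
    have key : ∀ N N' : ℕ, N < N' → ∀ ω, ω ∈ F N → ω ∈ F N' → False := by
      intro N N' hNN ω h1 h2
      simp only [hF, hG, Set.mem_preimage, Set.mem_inter_iff, Set.mem_setOf_eq,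
        iter_mem hsh, cnt_iter hsh] at h1 h2
      have hb : ω ∈ blk ((0 : ℤ) - N) := h1.1
      have hz := cnt_eq_zero.1 h2.2 (N' - 1 - N) (by omega)
      exact hz (by convert hb using 2; push_cast; omega)
    intro N N' hne
    rcases Nat.lt_or_ge N N' with h | h
    · exact Set.disjoint_left.2 fun ω hω hω' => key N N' h ω hω hω'
    · exact Set.disjoint_left.2 fun ω hω hω' => key N' N (by omega) ω hω' hω
  have hsum : ∑' N : ℕ, μ (F N) ≤ 1 := by
    rw [← measure_iUnion hFd hFm]
    exact prob_le_one
  by_contra hc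
  have hpos : 0 < μ (Abad blk 0) := pos_iff_ne_zero.2 hc
  have hle : ∀ N, μ (Abad blk 0) ≤ μ (F N) := by
    intro N
    rw [hFG N]
    exact measure_mono (hsub N)
  have htop : (⊤ : ℝ≥0∞) ≤ ∑' N : ℕ, μ (F N) := by
    calc (⊤ : ℝ≥0∞) = ∑' _ : ℕ, μ (Abad blk 0) := (ENNReal.tsum_const_eq_top_of_ne_zero hc).symm
    _ ≤ ∑' N : ℕ, μ (F N) := ENNReal.tsum_le_tsum hle
  rw [top_le_iff] at htop
  rw [htop] at hsum
  simp at hsum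

lemma good_of_not_bad {ω : Ω} (h0 : ω ∈ blk 0) (hnb : ω ∉ ⋃ s : ℕ, Abad blk s) :
    Good blk ω := by
  refine ⟨h0, fun s hs => ?_⟩
  by_contra hc
  push_neg at hc
  refine hnb (Set.mem_iUnion.2 ⟨s, hs, ?_⟩)
  simp only [Set.mem_iInter, Set.mem_compl_iff]
  intro u hu
  exact fun hb => absurd hb (by simpa using hc u hu)


lemma part1 {T : ℕ → Ω → ℕ} (hσ : MeasurePreserving σ μ μ)
    (hsh : ∀ (ω : Ω) (k : ℤ), σ ω ∈ blk k ↔ ω ∈ blk (k - 1))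
    (hT0 : ∀ ω, T 0 ω = 0)
    (hTs : ∀ (j : ℕ) (ω : Ω), T (j + 1) ω = sInf {t : ℕ | T j ω < t ∧ ω ∈ blk (t : ℤ)})
    (m t : ℕ) (ht : 1 ≤ t) :
    μ ({ω | T (m + 1) ω - T m ω = t} ∩ blk 0) = μ ({ω | T 1 ω = t} ∩ blk 0) := by
  have hTm := meas_T hm hT0 hTs
  set NB : Set Ω := ⋃ s : ℕ, Abad blk s with hNBdef
  have hNB0 : μ NB = 0 := measure_iUnion_null fun s => mu_Abad_zero hm hσ hsh s
  have hgood : ∀ ω : Ω, ω ∈ blk 0 → ω ∉ NB → Good blk ω := fun ω h0 hnb =>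
    good_of_not_bad hm h0 hnb
  set D : ℕ → Set Ω := fun s =>
    blk 0 ∩ (blk (s : ℤ) ∩ ({ω | cnt blk ω 0 s = m} ∩
      (blk ((s : ℤ) + t) ∩ {ω | cnt blk ω 0 (s + t) = m + 1}))) with hDdef
  have hDm : ∀ s, MeasurableSet (D s) := fun s =>
    (hm 0).inter ((hm _).inter (((meas_cnt hm 0 s) (measurableSet_singleton m)).inter
      ((hm _).inter ((meas_cnt hm 0 (s + t)) (measurableSet_singleton (m + 1))))))
  -- Step 1 : up to the null set NB, the gap event is the disjoint union of the D s
  have step1 : ({ω | T (m + 1) ω - T m ω = t} ∩ blk 0) \ NB = (⋃ s, D s) \ NB := by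
    ext ω
    simp only [Set.mem_diff, Set.mem_inter_iff, Set.mem_setOf_eq, Set.mem_iUnion]
    constructor
    · rintro ⟨⟨hgap, h0⟩, hnb⟩
      have hg := hgood ω h0 hnb
      have hspec := T_spec hg (hT0 ω) (fun j => hTs j ω)
      have hlt := (T_step hg (fun j => hTs j ω) m (hspec m).1).1
      have hTm1 : T (m + 1) ω = T m ω + t := by omega
      have hb2 : ω ∈ blk ((T m ω : ℤ) + t) := by
        have h := (hspec (m + 1)).1
        rw [hTm1] at h
        exact_mod_cast h
      have hc2 : cnt blk ω 0 (T m ω + t) = m + 1 := by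
        rw [← hTm1]; exact (hspec (m + 1)).2
      exact ⟨⟨T m ω, h0, (hspec m).1, (hspec m).2, hb2, hc2⟩, hnb⟩
    · rintro ⟨⟨s, h0, hbs, hcs, hbst, hcst⟩, hnb⟩
      have hg := hgood ω h0 hnb
      have h1 : T m ω = s :=
        (T_char hg (hT0 ω) (fun j => hTs j ω)).2 ⟨hbs, hcs⟩
      have h2 : T (m + 1) ω = s + t :=
        (T_char hg (hT0 ω) (fun j => hTs j ω)).2
          ⟨by exact_mod_cast hbst, hcst⟩
      exact ⟨⟨by omega, h0⟩, hnb⟩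
  have step2 : μ ({ω | T (m + 1) ω - T m ω = t} ∩ blk 0) = μ (⋃ s, D s) := by
    rw [← measure_diff_null (μ := μ) hNB0, step1, measure_diff_null (μ := μ) hNB0]
  -- Step 2 : the D s are pairwise disjoint
  have hDd : Pairwise (Function.onFun Disjoint D) := by
    have key : ∀ s s' : ℕ, s < s' → ∀ ω : Ω, ω ∈ D s → ω ∈ D s' → False := by
      rintro s s' hss ω ⟨_, hbs, hcs, _, _⟩ ⟨_, _, hcs', _, _⟩
      have h1 := cnt_lt_of_mem (blk := blk) (a := 0) hss (by simpa using hbs)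
      have h2 : cnt blk ω 0 s = m := hcs
      have h3 : cnt blk ω 0 s' = m := hcs'
      omega
    intro s s' hne
    rcases Nat.lt_or_ge s s' with h | h
    · exact Set.disjoint_left.2 fun ω hω hω' => key s s' h ω hω hω'
    · exact Set.disjoint_left.2 fun ω hω hω' => key s' s (by omega) ω hω' hω
  -- the target events after shifting
  set Q : Set Ω := blk 0 ∩ (blk (t : ℤ) ∩ {ω | cnt blk ω 0 t = 1}) with hQdef
  set Fut : ℕ → Set Ω := fun s =>
    blk (-(s : ℤ)) ∩ {ω | cnt blk ω (-(s : ℤ)) s = m} with hFutdef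
  have hQm : MeasurableSet Q :=
    (hm 0).inter ((hm _).inter ((meas_cnt hm 0 t) (measurableSet_singleton 1)))
  have hFutm : ∀ s, MeasurableSet (Fut s) := fun s =>
    (hm _).inter ((meas_cnt hm _ s) (measurableSet_singleton m))
  -- Step 3 : shifting D s by s
  have step3 : ∀ s : ℕ, μ (D s) = μ (Q ∩ Fut s) := by
    intro s
    have hpre : (σ^[s]) ⁻¹' (D s) = Q ∩ Fut s := by
      ext ω
      simp only [hDdef, hQdef, hFutdef, Set.mem_preimage, Set.mem_inter_iff, Set.mem_setOf_eq,
        iter_mem hsh, cnt_iter hsh]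
      have e1 : (0 : ℤ) - s = -(s : ℤ) := by ring
      have e2 : (s : ℤ) - s = 0 := by ring
      have e3 : (s : ℤ) + t - s = (t : ℤ) := by ring
      have e4 : cnt blk ω (0 - (s : ℤ)) (s + t) =
          cnt blk ω (-(s : ℤ)) s + cnt blk ω 0 t := by
        rw [e1, cnt_add]
        congr 2
        push_cast; ring
      rw [e4, e1, e2, e3]
      constructor
      · rintro ⟨h1, h2, h3, h4, h5⟩
        exact ⟨⟨h2, h4, by omega⟩, h1, h3⟩
      · rintro ⟨⟨h1, h2, h3⟩, h4, h5⟩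
        exact ⟨h4, h1, h5, h2, by omega⟩
    rw [← hpre]
    exact ((hσ.iterate s).measure_preimage (hDm s).nullMeasurableSet).symm
  -- Step 4 : the Fut s are pairwise disjoint
  have hFd : Pairwise (Function.onFun Disjoint Fut) := by
    have key : ∀ s s' : ℕ, s < s' → ∀ ω : Ω, ω ∈ Fut s → ω ∈ Fut s' → False := by
      rintro s s' hss ω ⟨hbs, hcs⟩ ⟨hbs', hcs'⟩
      have hdec : s' = (s' - s) + s := by omega
      have h1 : cnt blk ω (-(s' : ℤ)) s' =
          cnt blk ω (-(s' : ℤ)) (s' - s) + cnt blk ω (-(s : ℤ)) s := by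
        nth_rewrite 2 [hdec]
        rw [cnt_add]
        congr 2
        push_cast; omega
      have h2 : 0 < cnt blk ω (-(s' : ℤ)) (s' - s) := by
        refine cnt_mem_pos (u := 0) (by omega) ?_
        simpa using hbs'
      have e5 : cnt blk ω (-(s : ℤ)) s = m := hcs
      have e6 : cnt blk ω (-(s' : ℤ)) s' = m := hcs'
      omega
    intro s s' hne
    rcases Nat.lt_or_ge s s' with h | h
    · exact Set.disjoint_left.2 fun ω hω hω' => key s s' h ω hω hω'
    · exact Set.disjoint_left.2 fun ω hω hω' => key s' s (by omega) ω hω' hω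
  -- Step 5 : a.e. point of blk 0 has infinitely many future occurrences (Poincaré)
  have step5 : μ (Q \ ⋃ s, Fut s) = 0 := by
    have hae := (hσ.conservative).ae_mem_imp_frequently_image_mem
      (s := blk 0) (hm 0).nullMeasurableSet
    rw [ae_iff] at hae
    refine measure_mono_null ?_ hae
    rintro ω ⟨hQω, hnF⟩
    simp only [Set.mem_setOf_eq]
    have h0 : ω ∈ blk 0 := hQω.1
    intro himp
    have hfreq := himp h0
    have hinf : ∀ s : ℕ, ∃ u : ℕ, s < u ∧ ω ∈ blk (-(u : ℤ)) := by
      intro s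
      obtain ⟨u, hu1, hu2⟩ := Filter.frequently_atTop.1 hfreq (s + 1)
      refine ⟨u, by omega, ?_⟩
      rw [iter_mem hsh] at hu2
      simpa using hu2
    obtain ⟨sf, hb, hcnt⟩ := exists_fut h0 hinf m
    exact hnF (Set.mem_iUnion.2 ⟨sf, hb, hcnt⟩)
  have step6 : μ (⋃ s, Q ∩ Fut s) = μ Q := by
    have h1 : (⋃ s, Q ∩ Fut s) = Q ∩ ⋃ s, Fut s := (Set.inter_iUnion _ _).symm
    rw [h1]
    have h2 := measure_inter_add_diff (μ := μ) Q (MeasurableSet.iUnion hFutm)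
    rw [step5, add_zero] at h2
    exact h2
  calc μ ({ω | T (m + 1) ω - T m ω = t} ∩ blk 0)
      = μ (⋃ s, D s) := step2
    _ = ∑' s, μ (D s) := measure_iUnion hDd hDm
    _ = ∑' s, μ (Q ∩ Fut s) := tsum_congr step3
    _ = μ (⋃ s, Q ∩ Fut s) := by
        refine (measure_iUnion ?_ fun s => hQm.inter (hFutm s)).symm
        intro s s' hne
        exact ((hFd hne).mono Set.inter_subset_right Set.inter_subset_right)
    _ = μ Q := step6
    _ = μ ({ω | T 1 ω = t} ∩ blk 0) := by
        congr 1
        ext ω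
        simp only [hQdef, Set.mem_inter_iff, Set.mem_setOf_eq]
        constructor
        · rintro ⟨h0, hbt, hct⟩
          exact ⟨(T1_char h0 (hT0 ω) (fun j => hTs j ω) ht).2 ⟨hbt, hct⟩, h0⟩
        · rintro ⟨h1, h0⟩
          obtain ⟨hbt, hct⟩ := (T1_char h0 (hT0 ω) (fun j => hTs j ω) ht).1 h1
          exact ⟨h0, hbt, hct⟩


lemma lint_nat {f : Ω → ℕ} (hf : Measurable f) {S : Set Ω} (hS : MeasurableSet S) :
    ∫⁻ ω in S, (f ω : ℝ≥0∞) ∂μ = ∑' t : ℕ, μ ({ω | t < f ω} ∩ S) := by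
  have hpt : ∀ ω, ((f ω : ℝ≥0∞)) =
      ∑' t : ℕ, Set.indicator {ω' | t < f ω'} (fun _ => (1 : ℝ≥0∞)) ω := by
    intro ω
    rw [tsum_eq_sum (s := Finset.range (f ω))
      (fun t ht => Set.indicator_of_notMem (by simpa using ht) _)]
    have hone : ∀ t ∈ Finset.range (f ω),
        Set.indicator {ω' | t < f ω'} (fun _ => (1 : ℝ≥0∞)) ω = 1 := fun t ht =>
      Set.indicator_of_mem (show ω ∈ {ω' | t < f ω'} from Finset.mem_range.1 ht) _
    rw [Finset.sum_congr rfl hone]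
    simp
  calc ∫⁻ ω in S, (f ω : ℝ≥0∞) ∂μ
      = ∫⁻ ω in S, ∑' t : ℕ, Set.indicator {ω' | t < f ω'} (fun _ => (1 : ℝ≥0∞)) ω ∂μ :=
        lintegral_congr fun ω => hpt ω
    _ = ∑' t : ℕ, ∫⁻ ω in S, Set.indicator {ω' | t < f ω'} (fun _ => (1 : ℝ≥0∞)) ω ∂μ :=
        lintegral_tsum fun t =>
          (measurable_const.indicator (hf (show MeasurableSet (Set.Ioi t) by trivial))).aemeasurable
    _ = ∑' t : ℕ, μ ({ω | t < f ω} ∩ S) := by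
        refine tsum_congr fun t => ?_
        have hms : MeasurableSet {ω' | t < f ω'} := hf (show MeasurableSet (Set.Ioi t) by trivial)
        rw [lintegral_indicator_const hms, one_mul, Measure.restrict_apply hms]

lemma part2 {T : ℕ → Ω → ℕ} (hσ : MeasurePreserving σ μ μ)
    (hsh : ∀ (ω : Ω) (k : ℤ), σ ω ∈ blk k ↔ ω ∈ blk (k - 1))
    (hT0 : ∀ ω, T 0 ω = 0)
    (hTs : ∀ (j : ℕ) (ω : Ω), T (j + 1) ω = sInf {t : ℕ | T j ω < t ∧ ω ∈ blk (t : ℤ)})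
    (j : ℕ) :
    (∫ ω in blk 0, (T j ω : ℝ) ∂μ) / (μ (blk 0)).toReal
      = (j : ℝ) * ((∫ ω in blk 0, (T 1 ω : ℝ) ∂μ) / (μ (blk 0)).toReal) := by
  have hTm := meas_T hm hT0 hTs
  have hgapm : ∀ i : ℕ, Measurable fun ω => T (i + 1) ω - T i ω :=
    fun i => (hTm (i + 1)).sub (hTm i)
  set E : Set Ω := blk 0 with hEdef
  have hEm : MeasurableSet E := hm 0
  set I : ℝ≥0∞ := ∫⁻ ω in E, (T 1 ω : ℝ≥0∞) ∂μ with hIdef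
  -- survival functions of the gaps agree with that of T 1
  have hsurv : ∀ (f : Ω → ℕ), Measurable f →
      (∀ v : ℕ, 1 ≤ v → μ ({ω | f ω = v} ∩ E) = μ ({ω | T 1 ω = v} ∩ E)) →
      ∀ t : ℕ, μ ({ω | t < f ω} ∩ E) = μ ({ω | t < T 1 ω} ∩ E) := by
    intro f hfm hfd t
    have hdec : ∀ (g : Ω → ℕ), Measurable g →
        μ ({ω | t < g ω} ∩ E) = ∑' u : ℕ, μ ({ω | g ω = t + 1 + u} ∩ E) := by
      intro g hg
      have he : {ω | t < g ω} ∩ E = ⋃ u : ℕ, ({ω | g ω = t + 1 + u} ∩ E) := by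
        ext ω
        simp only [Set.mem_inter_iff, Set.mem_setOf_eq, Set.mem_iUnion]
        constructor
        · rintro ⟨h1, h2⟩; exact ⟨g ω - t - 1, by omega, h2⟩
        · rintro ⟨u, h1, h2⟩; exact ⟨by omega, h2⟩
      rw [he]
      refine measure_iUnion ?_ fun u =>
        (hg (show MeasurableSet {x : ℕ | x = t + 1 + u} by trivial)).inter hEm
      intro u u' hne
      refine Set.disjoint_left.2 fun ω hω hω' => hne ?_
      have h1 : g ω = t + 1 + u := hω.1
      have h2 : g ω = t + 1 + u' := hω'.1
      omega
    rw [hdec f hfm, hdec (T 1) (hTm 1)]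
    exact tsum_congr fun u => hfd (t + 1 + u) (by omega)
  have key1 : ∀ i : ℕ, ∫⁻ ω in E, ((T (i + 1) ω - T i ω : ℕ) : ℝ≥0∞) ∂μ = I := by
    intro i
    rw [lint_nat hm (hgapm i) hEm, hIdef, lint_nat hm (hTm 1) hEm]
    refine tsum_congr fun t => ?_
    refine hsurv _ (hgapm i) (fun v hv => ?_) t
    exact part1 hm hσ hsh hT0 hTs i v hv
  -- telescoping
  have htel : ∀ᵐ ω ∂(μ.restrict E), (T j ω : ℝ≥0∞) =
      ∑ i ∈ Finset.range j, ((T (i + 1) ω - T i ω : ℕ) : ℝ≥0∞) := by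
    have hNB0 : μ (⋃ s : ℕ, Abad blk s) = 0 :=
      measure_iUnion_null fun s => mu_Abad_zero hm hσ hsh s
    have hNB0' : (μ.restrict E) (⋃ s : ℕ, Abad blk s) = 0 :=
      le_antisymm (le_trans (Measure.restrict_apply_le _ _) hNB0.le) zero_le
    filter_upwards [ae_restrict_mem hEm, (measure_eq_zero_iff_ae_notMem.1 hNB0')] with ω h0 hnb
    have hg : Good blk ω := good_of_not_bad hm h0 hnb
    have hmono : ∀ i : ℕ, T i ω < T (i + 1) ω := fun i =>
      (T_step hg (fun j => hTs j ω) i (T_spec hg (hT0 ω) (fun j => hTs j ω) i).1).1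
    have htel' : ∀ n : ℕ, T n ω = ∑ i ∈ Finset.range n, (T (i + 1) ω - T i ω) := by
      intro n
      induction n with
      | zero => simpa using hT0 ω
      | succ n ih =>
        rw [Finset.sum_range_succ, ← ih]
        have := hmono n
        omega
    rw [htel' j, Nat.cast_sum]
  have hgapm' : ∀ i : ℕ, Measurable fun ω => ((T (i + 1) ω - T i ω : ℕ) : ℝ≥0∞) :=
    fun i => measurable_from_top.comp (hgapm i)
  have key2 : ∫⁻ ω in E, (T j ω : ℝ≥0∞) ∂μ = j * I := by
    rw [lintegral_congr_ae htel, lintegral_finset_sum' _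
      (fun i _ => (hgapm' i).aemeasurable)]
    rw [Finset.sum_congr rfl fun i _ => key1 i]
    simp [mul_comm]
  -- Bochner integrals
  have hBoch : ∀ n : ℕ, ∫ ω in E, (T n ω : ℝ) ∂μ = (∫⁻ ω in E, (T n ω : ℝ≥0∞) ∂μ).toReal := by
    intro n
    have hTmr : Measurable fun ω => (T n ω : ℝ) := measurable_from_top.comp (hTm n)
    rw [integral_eq_lintegral_of_nonneg_ae (ae_of_all _ fun ω => by positivity)
      hTmr.aestronglyMeasurable]
    congr 1
    exact lintegral_congr fun ω => ENNReal.ofReal_natCast _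
  rw [hBoch j, hBoch 1, key2, ENNReal.toReal_mul, ENNReal.toReal_natCast]
  rw [hIdef]
  ring

end Meas

end Stmt4


open MeasureTheory

/-- For a stationary process `(Y_n)` and successive backward recurrence times
`T₀ = 0 < T₁ < T₂ < ⋯` of a block `y` with positive probability, the gaps between
successive recurrence times are, conditioned on `Y₁^L = y`, identically distributed:
`P[T_n - T_{n-1} = t, Y₁^L = y] = P[T₁ = t, Y₁^L = y]` for all `n, t ≥ 1`; consequently
`E[T_j | Y₁^L = y] = j · E[T₁ | Y₁^L = y]`. -/
theorem stmt_4 {Ω B : Type*} [MeasurableSpace Ω]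
    (μ : Measure Ω) [IsProbabilityMeasure μ]
    [Fintype B] [MeasurableSpace B] [MeasurableSingletonClass B]
    (Y : ℤ → Ω → B) (hmY : ∀ n, Measurable (Y n))
    (σ : Ω → Ω) (hσ : MeasurePreserving σ μ μ)
    (hY : ∀ n ω, Y n (σ ω) = Y (n + 1) ω)
    (L : ℕ) (hL : 1 ≤ L) (y : Fin L → B)
    (Ey : Set Ω) (hEy : Ey = {ω | ∀ i : Fin L, Y (1 + (i : ℕ) : ℤ) ω = y i})
    (hpos : 0 < μ Ey)
    (T : ℕ → Ω → ℕ)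
    (hT0 : ∀ ω, T 0 ω = 0)
    (hTs : ∀ j ω, T (j + 1) ω = sInf {t : ℕ | T j ω < t ∧
      ∀ i : Fin L, Y (1 + (i : ℕ) - (t : ℕ) : ℤ) ω = y i}) :
    (∀ n t : ℕ, 1 ≤ n → 1 ≤ t →
      μ ({ω | T n ω - T (n - 1) ω = t} ∩ Ey) = μ ({ω | T 1 ω = t} ∩ Ey)) ∧
    (∀ j : ℕ,
      (∫ ω in Ey, (T j ω : ℝ) ∂μ) / (μ Ey).toReal
        = (j : ℝ) * ((∫ ω in Ey, (T 1 ω : ℝ) ∂μ) / (μ Ey).toReal)) := by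
  classical
  set blk : ℤ → Set Ω := fun k => {ω | ∀ i : Fin L, Y (1 + (i : ℕ) - k) ω = y i} with hblk
  have hm : ∀ k : ℤ, MeasurableSet (blk k) := by
    intro k
    have he : blk k = ⋂ i : Fin L, (Y (1 + (i : ℕ) - k)) ⁻¹' {y i} := by
      ext ω
      simp [hblk, Set.mem_iInter]
    rw [he]
    exact MeasurableSet.iInter fun i => (hmY _) (measurableSet_singleton _)
  have hsh : ∀ (ω : Ω) (k : ℤ), σ ω ∈ blk k ↔ ω ∈ blk (k - 1) := by
    intro ω k
    simp only [hblk, Set.mem_setOf_eq]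
    refine forall_congr' fun i => ?_
    rw [hY, show (1 + ((i : ℕ) : ℤ) - (k - 1)) = 1 + (i : ℕ) - k + 1 by ring]
  have hEy' : Ey = blk 0 := by
    rw [hEy]
    ext ω
    simp [hblk]
  have hTs' : ∀ (j : ℕ) (ω : Ω),
      T (j + 1) ω = sInf {t : ℕ | T j ω < t ∧ ω ∈ blk (t : ℤ)} := by
    intro j ω
    rw [hTs j ω]
    rfl
  constructor
  · intro n t hn ht
    obtain ⟨m, rfl⟩ : ∃ m, n = m + 1 := ⟨n - 1, by omega⟩
    rw [hEy']
    have h := Stmt4.part1 (μ := μ) (σ := σ) (blk := blk) hm hσ hsh hT0 hTs' m t ht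
    simpa using h
  · intro j
    rw [hEy']
    exact Stmt4.part2 (μ := μ) (σ := σ) (blk := blk) hm hσ hsh hT0 hTs' j
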